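/- For any even integer D ≥ 2 and for infinitely many values of N, there exists an N-vertex D-regular graph G* whose smallest adjacency-matrix eigenvalue is λ_min = −2 and which satisfies N − Z(G*) ≥ 4N/(D+2) − 2. (Such a G* can be taken to be the line graph of a Hamiltonian d-regular graph with D = 2d−2.) -/

import Mathlib

namespace ZeroForcing

variable {V : Type*}

/-- The set of vertices which eventually become black in the zero forcing process on `G`
starting from the initially black set `S`. -/
inductive Forced (G : SimpleGraph V) (S : Set V) : V → Prop
  | init (v : V) (hv : v ∈ S) : Forced G S v
  | force (u w : V) (hu : Forced G S u) (hadj : G.Adj u w)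
      (hothers : ∀ x, G.Adj u x → x ≠ w → Forced G S x) : Forced G S w

/-- `S` is a zero forcing set of `G` if iterating the forcing rule makes every vertex black. -/
def IsZeroForcingSet (G : SimpleGraph V) (S : Set V) : Prop := ∀ v, Forced G S v

/-- The zero forcing number of `G`: the minimum cardinality of a zero forcing set. -/
noncomputable def zeroForcingNumber (G : SimpleGraph V) [Fintype V] : ℕ :=
  sInf {k | ∃ S : Finset V, S.card = k ∧ IsZeroForcingSet G ↑S}


/-- The adjacency matrix of a graph over `ℝ` is Hermitian. -/
lemma adjMatrix_isHermitian {V : Type*} [Fintype V] (G : SimpleGraph V)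
    [DecidableRel G.Adj] : (G.adjMatrix ℝ).IsHermitian := by
  rw [Matrix.IsHermitian, Matrix.conjTranspose_eq_transpose_of_trivial]
  exact G.isSymm_adjMatrix

open scoped Classical in
/-- The eigenvalues of the adjacency matrix of `G`. -/
noncomputable def adjEigenvalues {n : ℕ} (G : SimpleGraph (Fin n)) : Fin n → ℝ :=
  (adjMatrix_isHermitian G).eigenvalues

/-- The smallest adjacency-matrix eigenvalue of `G`. -/
noncomputable def lambdaMin {n : ℕ} (G : SimpleGraph (Fin n)) : ℝ :=
  ⨅ i, adjEigenvalues G i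

open scoped Classical in
/-- An `(n, d, λ)`-graph: a `d`-regular graph on `n` vertices all of whose
adjacency eigenvalues except the largest one (which equals `d`) are at most `lam`
in absolute value. -/
def IsNDLGraph {n : ℕ} (G : SimpleGraph (Fin n)) (d : ℕ) (lam : ℝ) : Prop :=
  G.IsRegularOfDegree d ∧
    ∃ i₀ : Fin n, adjEigenvalues G i₀ = d ∧ ∀ i : Fin n, i ≠ i₀ → |adjEigenvalues G i| ≤ lam

open scoped Classical in
/-- `e(U, W)`: the number of edges with one endpoint in `U` and the other in `W`,
where edges with both endpoints in `U ∩ W` are counted twice. -/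
noncomputable def edgeCountBetween {n : ℕ} (G : SimpleGraph (Fin n))
    (U W : Finset (Fin n)) : ℕ :=
  ((U ×ˢ W).filter fun p => G.Adj p.1 p.2).card

section Aux

/-- first endpoint (as a natural number) of edge index `i` -/
def eA (m t : ℕ) (i : ℕ) : ℕ := if i < t * m then i % m else i - t * m
/-- difference (second endpoint minus first) of edge index `i` -/
def eD (m t : ℕ) (i : ℕ) : ℕ := if i < t * m then i / m + 1 else m / 2

section basic
variable {m t s : ℕ}

lemma hm0 (ht : 1 ≤ t) (htm : 2 * t < m / 2) : 0 < m := by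
  have := Nat.div_le_self m 2; omega

lemma eA_lt (htm : 2 * t < m / 2) (hs : s ≤ m / 2) (ht : 1 ≤ t)
    {i : ℕ} (hi : i < t * m + s) : eA m t i < m := by
  have h0 : 0 < m := hm0 ht htm
  have := Nat.div_le_self m 2
  unfold eA; split
  · exact Nat.mod_lt _ h0
  · omega

lemma eD_pos (ht : 1 ≤ t) (htm : 2 * t < m / 2) (i : ℕ) : 1 ≤ eD m t i := by
  unfold eD; split
  · exact Nat.le_add_left 1 _
  · omega

lemma eD_le (htm : 2 * t < m / 2) (ht : 1 ≤ t) (i : ℕ) : eD m t i ≤ m / 2 := by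
  have h0 : 0 < m := hm0 ht htm
  unfold eD; split
  · rename_i h
    have : i / m < t := (Nat.div_lt_iff_lt_mul h0).2 (by omega)
    omega
  · omega

lemma eD_le_t (htm : 2 * t < m / 2) (ht : 1 ≤ t) {i : ℕ} (hi : i < t * m) : eD m t i ≤ t := by
  have h0 : 0 < m := hm0 ht htm
  unfold eD; rw [if_pos hi]
  have : i / m < t := (Nat.div_lt_iff_lt_mul h0).2 (by omega)
  omega

lemma decode_inj (htm : 2 * t < m / 2) (ht : 1 ≤ t) {i j : ℕ} (hi : i < t * m + s) (hj : j < t * m + s)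
    (h1 : eA m t i = eA m t j) (h2 : eD m t i = eD m t j) : i = j := by
  have h0 : 0 < m := hm0 ht htm
  by_cases hit : i < t * m <;> by_cases hjt : j < t * m
  · have e1 := Nat.div_add_mod i m
    have e2 := Nat.div_add_mod j m
    unfold eA at h1; unfold eD at h2
    rw [if_pos hit, if_pos hjt] at h1
    rw [if_pos hit, if_pos hjt] at h2
    have hdiv : m * (i / m) = m * (j / m) := by rw [show i / m = j / m from by omega]
    omega
  · have a := eD_le_t htm ht hit
    have b : eD m t j = m / 2 := by unfold eD; rw [if_neg hjt]
    omega
  · have a := eD_le_t htm ht hjt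
    have b : eD m t i = m / 2 := by unfold eD; rw [if_neg hit]
    omega
  · unfold eA at h1; rw [if_neg hit, if_neg hjt] at h1; omega

lemma cast_eq_iff {x y : ℕ} : ((x : ZMod m) = (y : ZMod m)) ↔ x % m = y % m := by
  rw [ZMod.natCast_eq_natCast_iff]; rfl

/-- mod-eq implies equality for values below `m` -/
lemma mod_inj {x y : ℕ} (hx : x < m) (hy : y < m) (h : x % m = y % m) : x = y := by
  rwa [Nat.mod_eq_of_lt hx, Nat.mod_eq_of_lt hy] at h

lemma no_loop (htm : 2 * t < m / 2) (hs : s ≤ m / 2) (ht : 1 ≤ t) {i : ℕ} (hi : i < t * m + s) :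
    ((eA m t i : ZMod m) ≠ ((eA m t i + eD m t i : ℕ) : ZMod m)) := by
  intro h
  rw [cast_eq_iff] at h
  have ha := eA_lt htm hs ht hi
  have hd1 := eD_pos (m := m) ht htm i
  have hd2 := eD_le htm ht i
  have hm2 := Nat.div_le_self m 2
  rw [Nat.mod_eq_of_lt ha] at h
  rcases Nat.lt_or_ge (eA m t i + eD m t i) m with hlt | hge
  · rw [Nat.mod_eq_of_lt hlt] at h; omega
  · have hlt2 : eA m t i + eD m t i - m < m := by omega
    rw [Nat.mod_eq_sub_mod hge, Nat.mod_eq_of_lt hlt2] at h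
    omega

/-- uncrossed shared-pair implies equality of edge indices -/
lemma pair_inj (htm : 2 * t < m / 2) (hs : s ≤ m / 2) (ht : 1 ≤ t)
    {i j : ℕ} (hi : i < t * m + s) (hj : j < t * m + s)
    (h1 : (eA m t i : ZMod m) = (eA m t j : ZMod m))
    (h2 : ((eA m t i + eD m t i : ℕ) : ZMod m) = ((eA m t j + eD m t j : ℕ) : ZMod m)) :
    i = j := by
  have ha1 := eA_lt htm hs ht hi
  have ha2 := eA_lt htm hs ht hj
  have hm2 := Nat.div_le_self m 2
  rw [cast_eq_iff] at h1 h2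
  have heA : eA m t i = eA m t j := mod_inj ha1 ha2 h1
  apply decode_inj htm ht hi hj heA
  have hd1 := eD_pos (m := m) ht htm i
  have hd2 := eD_le htm ht i
  have hd3 := eD_pos (m := m) ht htm j
  have hd4 := eD_le htm ht j
  have hmod : (eD m t i) ≡ (eD m t j) [MOD m] := by
    have h2' : eA m t i + eD m t i ≡ eA m t i + eD m t j [MOD m] := by
      rw [heA] at h2 ⊢; exact h2
    exact Nat.ModEq.add_left_cancel' _ h2'
  exact mod_inj (by omega) (by omega) hmod

/-- crossed shared-pair is impossible -/
lemma pair_cross (hm : 2 * (m / 2) = m) (htm : 2 * t < m / 2) (hs : s ≤ m / 2) (ht : 1 ≤ t)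
    {i j : ℕ} (hi : i < t * m + s) (hj : j < t * m + s)
    (h1 : (eA m t i : ZMod m) = ((eA m t j + eD m t j : ℕ) : ZMod m))
    (h2 : ((eA m t i + eD m t i : ℕ) : ZMod m) = (eA m t j : ZMod m)) : False := by
  have ha1 := eA_lt htm hs ht hi
  have ha2 := eA_lt htm hs ht hj
  have hd1 := eD_pos (m := m) ht htm i
  have hd2 := eD_le htm ht i
  have hd3 := eD_pos (m := m) ht htm j
  have hd4 := eD_le htm ht j
  -- derive eD i + eD j ≡ 0 [MOD m]
  have key : (eD m t i + eD m t j) % m = 0 := by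
    have c2 : ((eA m t i + (eD m t i + eD m t j) : ℕ) : ZMod m)
        = ((eA m t i + 0 : ℕ) : ZMod m) := by
      push_cast
      push_cast at h1 h2
      linear_combination h2 - h1
    rw [cast_eq_iff] at c2
    have := Nat.ModEq.add_left_cancel' (c := eA m t i) c2
    simpa [Nat.ModEq] using this
  have hsum : eD m t i + eD m t j = m := by
    rcases Nat.lt_or_ge (eD m t i + eD m t j) m with hlt | hge
    · rw [Nat.mod_eq_of_lt hlt] at key; omega
    · have h2m : eD m t i + eD m t j - m < m := by omega
      rw [Nat.mod_eq_sub_mod hge, Nat.mod_eq_of_lt h2m] at key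
      omega
  have hdi : eD m t i = m / 2 := by omega
  have hdj : eD m t j = m / 2 := by omega
  -- so both are "diameter" edges
  have hit : ¬ i < t * m := fun h => by have := eD_le_t htm ht h; omega
  have hjt : ¬ j < t * m := fun h => by have := eD_le_t htm ht h; omega
  have hAi : eA m t i = i - t * m := by unfold eA; rw [if_neg hit]
  have hAj : eA m t j = j - t * m := by unfold eA; rw [if_neg hjt]
  have hAi' : eA m t i < m / 2 := by rw [hAi]; omega
  have hAj' : eA m t j < m / 2 := by rw [hAj]; omega
  rw [cast_eq_iff] at h1
  rw [Nat.mod_eq_of_lt ha1, hdj, Nat.mod_eq_of_lt (by omega)] at h1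
  omega

end basic

section graph
open Finset Matrix

/-- two edge indices share an endpoint -/
def shares (m t : ℕ) (i j : ℕ) : Prop :=
  ((eA m t i : ZMod m) = (eA m t j : ZMod m)) ∨
  ((eA m t i : ZMod m) = ((eA m t j + eD m t j : ℕ) : ZMod m)) ∨
  (((eA m t i + eD m t i : ℕ) : ZMod m) = (eA m t j : ZMod m)) ∨
  (((eA m t i + eD m t i : ℕ) : ZMod m) = ((eA m t j + eD m t j : ℕ) : ZMod m))

instance sharesDec (m t i j : ℕ) : Decidable (shares m t i j) := by
  unfold shares; exact inferInstance

/-- the line graph of our circulant graph -/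
def lg (m t s : ℕ) : SimpleGraph (Fin (t * m + s)) where
  Adj i j := i ≠ j ∧ shares m t i.val j.val
  symm := by
    constructor
    rintro i j ⟨hne, h⟩
    refine ⟨hne.symm, ?_⟩
    unfold shares at h ⊢
    rcases h with h | h | h | h
    · exact Or.inl h.symm
    · exact Or.inr (Or.inr (Or.inl h.symm))
    · exact Or.inr (Or.inl h.symm)
    · exact Or.inr (Or.inr (Or.inr h.symm))
  loopless := ⟨fun i h => h.1 rfl⟩

/-- the incidence matrix -/
noncomputable def Bm (m t s : ℕ) : Matrix (ZMod m) (Fin (t * m + s)) ℝ := fun u j =>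
  (if u = (eA m t j.val : ZMod m) then 1 else 0) +
  (if u = ((eA m t j.val + eD m t j.val : ℕ) : ZMod m) then 1 else 0)

variable {m t s : ℕ} [NeZero m]

lemma sum_ind_mul (a c : ZMod m) :
    (∑ u : ZMod m, (if u = a then (1:ℝ) else 0) * (if u = c then 1 else 0))
      = if a = c then 1 else 0 := by
  rw [Finset.sum_eq_single a]
  · simp [eq_comm]
  · intro b _ hb; simp [hb]
  · simp

lemma BtB (hm : 2 * (m / 2) = m) (htm : 2 * t < m / 2) (hs : s ≤ m / 2) (ht : 1 ≤ t)
    [DecidableRel (lg m t s).Adj] :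
    ((lg m t s).adjMatrix ℝ) + 2 • (1 : Matrix (Fin (t * m + s)) (Fin (t * m + s)) ℝ)
      = (Bm m t s)ᵀ * (Bm m t s) := by
  ext i j
  have expand : ((Bm m t s)ᵀ * (Bm m t s)) i j =
      (if (eA m t i.val : ZMod m) = (eA m t j.val : ZMod m) then (1:ℝ) else 0) +
      ((if (eA m t i.val : ZMod m) = ((eA m t j.val + eD m t j.val : ℕ) : ZMod m) then 1 else 0) +
      ((if ((eA m t i.val + eD m t i.val : ℕ) : ZMod m) = (eA m t j.val : ZMod m) then 1 else 0) +
      (if ((eA m t i.val + eD m t i.val : ℕ) : ZMod m) = ((eA m t j.val + eD m t j.val : ℕ) : ZMod m) then 1 else 0))) := by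
    simp only [Matrix.mul_apply, Matrix.transpose_apply, Bm]
    rw [← sum_ind_mul (m := m) (eA m t i.val) (eA m t j.val),
      ← sum_ind_mul (m := m) (eA m t i.val) ((eA m t j.val + eD m t j.val : ℕ) : ZMod m),
      ← sum_ind_mul (m := m) ((eA m t i.val + eD m t i.val : ℕ) : ZMod m) (eA m t j.val),
      ← sum_ind_mul (m := m) ((eA m t i.val + eD m t i.val : ℕ) : ZMod m)
        ((eA m t j.val + eD m t j.val : ℕ) : ZMod m),
      ← Finset.sum_add_distrib, ← Finset.sum_add_distrib, ← Finset.sum_add_distrib]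
    congr 1; funext u; ring
  rw [expand]
  by_cases hij : i = j
  · subst hij
    have h1 := no_loop htm hs ht i.isLt
    have h1' : ¬ (((eA m t i.val + eD m t i.val : ℕ) : ZMod m) = (eA m t i.val : ZMod m)) :=
      fun h => h1 h.symm
    simp only [SimpleGraph.adjMatrix_apply, Matrix.add_apply, Matrix.smul_apply,
      Matrix.one_apply_eq, SimpleGraph.irrefl, if_false]
    rw [if_neg h1, if_neg h1']
    norm_num
  · have hvne : i.val ≠ j.val := fun h => hij (Fin.ext h)
    simp only [SimpleGraph.adjMatrix_apply, Matrix.add_apply, Matrix.smul_apply,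
      Matrix.one_apply_ne hij]
    have hAdj : (lg m t s).Adj i j ↔ shares m t i.val j.val := by
      simp [lg, hij]
    have hif : (if (lg m t s).Adj i j then (1:ℝ) else 0)
        = (if shares m t i.val j.val then 1 else 0) := by
      by_cases hsh : shares m t i.val j.val
      · rw [if_pos (hAdj.mpr hsh), if_pos hsh]
      · rw [if_neg (fun h => hsh (hAdj.mp h)), if_neg hsh]
    rw [hif, smul_zero, add_zero]
    by_cases h11 : (eA m t i.val : ZMod m) = (eA m t j.val : ZMod m) <;>
    by_cases h12 : (eA m t i.val : ZMod m) = ((eA m t j.val + eD m t j.val : ℕ) : ZMod m) <;>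
    by_cases h21 : ((eA m t i.val + eD m t i.val : ℕ) : ZMod m) = (eA m t j.val : ZMod m) <;>
    by_cases h22 : ((eA m t i.val + eD m t i.val : ℕ) : ZMod m) = ((eA m t j.val + eD m t j.val : ℕ) : ZMod m) <;>
    first
      | (exact absurd (pair_inj htm hs ht i.isLt j.isLt h11 h22) hvne)
      | (exact (pair_cross hm htm hs ht i.isLt j.isLt h12 h21).elim)
      | (exact absurd (h11.symm.trans h12) (no_loop htm hs ht j.isLt))
      | (exact absurd (h21.symm.trans h22) (no_loop htm hs ht j.isLt))
      | (exact absurd (h11.trans h21.symm) (no_loop htm hs ht i.isLt))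
      | (exact absurd (h12.trans h22.symm) (no_loop htm hs ht i.isLt))
      | (rw [if_pos (show shares m t i.val j.val by unfold shares; exact Or.inl h11),
          if_pos h11, if_neg h12, if_neg h21, if_neg h22]; norm_num)
      | (rw [if_pos (show shares m t i.val j.val by unfold shares; exact Or.inr (Or.inl h12)),
          if_neg h11, if_pos h12, if_neg h21, if_neg h22]; norm_num)
      | (rw [if_pos (show shares m t i.val j.val by unfold shares; exact Or.inr (Or.inr (Or.inl h21))),
          if_neg h11, if_neg h12, if_pos h21, if_neg h22]; norm_num)
      | (rw [if_pos (show shares m t i.val j.val by unfold shares; exact Or.inr (Or.inr (Or.inr h22))),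
          if_neg h11, if_neg h12, if_neg h21, if_pos h22]; norm_num)
      | (rw [if_neg (show ¬ shares m t i.val j.val by
            unfold shares; push_neg; exact ⟨h11, h12, h21, h22⟩),
          if_neg h11, if_neg h12, if_neg h21, if_neg h22]; norm_num)

end graph

section rowsum
open Finset Matrix
variable {m t s : ℕ} [NeZero m]

/-- decomposition of the index set -/
def enc (m t s : ℕ) : (Fin t × Fin m) ⊕ Fin s ≃ Fin (t * m + s) :=
  (Equiv.sumCongr finProdFinEquiv (Equiv.refl _)).trans finSumFinEquiv

lemma enc_inl_val (p : Fin t × Fin m) : ((enc m t s (Sum.inl p)) : ℕ) = p.2.val + m * p.1.val := rfl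

lemma enc_inr_val (k : Fin s) : ((enc m t s (Sum.inr k)) : ℕ) = t * m + k.val := rfl

lemma eA_inl (p : Fin t × Fin m) : eA m t (p.2.val + m * p.1.val) = p.2.val := by
  have hlt : p.2.val + m * p.1.val < t * m := by
    have := (finProdFinEquiv p).isLt
    simpa using this
  unfold eA
  rw [if_pos hlt, Nat.add_mul_mod_self_left, Nat.mod_eq_of_lt p.2.isLt]

lemma eD_inl (p : Fin t × Fin m) (hm0 : 0 < m) :
    eD m t (p.2.val + m * p.1.val) = p.1.val + 1 := by
  have hlt : p.2.val + m * p.1.val < t * m := by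
    have := (finProdFinEquiv p).isLt
    simpa using this
  unfold eD
  rw [if_pos hlt, Nat.add_mul_div_left _ _ hm0, Nat.div_eq_of_lt p.2.isLt]
  omega

lemma eA_inr (k : Fin s) : eA m t (t * m + k.val) = k.val := by
  unfold eA; rw [if_neg (by omega)]; omega

lemma eD_inr (k : Fin s) : eD m t (t * m + k.val) = m / 2 := by
  unfold eD; rw [if_neg (by omega)]

/-- the canonical equivalence `Fin m ≃ ZMod m` -/
def zEquiv (m : ℕ) [NeZero m] : Fin m ≃ ZMod m where
  toFun v := (v.val : ZMod m)
  invFun u := ⟨u.val, ZMod.val_lt u⟩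
  left_inv v := by ext; simp [ZMod.val_cast_of_lt v.isLt]
  right_inv u := by simp [ZMod.natCast_rightInverse u]

lemma sum_ind (u : ZMod m) : (∑ w : ZMod m, if u = w then (1:ℝ) else 0) = 1 := by
  simp

lemma sum_cast_ind (u : ZMod m) (c : ℕ) :
    (∑ v : Fin m, if u = ((v.val + c : ℕ) : ZMod m) then (1:ℝ) else 0) = 1 := by
  have : ∀ v : Fin m, (((v.val + c : ℕ) : ZMod m)) = (zEquiv m v) + (c : ZMod m) := by
    intro v; push_cast; rfl
  calc (∑ v : Fin m, if u = ((v.val + c : ℕ) : ZMod m) then (1:ℝ) else 0)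
      = ∑ v : Fin m, if u = (zEquiv m v) + (c : ZMod m) then (1:ℝ) else 0 := by
        refine Finset.sum_congr rfl fun v _ => by rw [this v]
    _ = ∑ w : ZMod m, if u = w + (c : ZMod m) then (1:ℝ) else 0 :=
        Fintype.sum_equiv (zEquiv m) _ _ (fun v => rfl)
    _ = ∑ w : ZMod m, if u - (c : ZMod m) = w then (1:ℝ) else 0 := by
        refine Finset.sum_congr rfl fun w _ => ?_
        congr 1
        exact propext ⟨fun h => by rw [h]; ring, fun h => by rw [← h]; ring⟩
    _ = 1 := sum_ind _

lemma sum_inr_low (hs : s ≤ m / 2) (u : ZMod m) :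
    (∑ k : Fin s, if u = ((k.val : ℕ) : ZMod m) then (1:ℝ) else 0)
      = if u.val < s then 1 else 0 := by
  have hsm : s ≤ m := le_trans hs (Nat.div_le_self m 2)
  have key : ∀ k : Fin s, (u = ((k.val : ℕ) : ZMod m)) ↔ u.val = k.val := by
    intro k
    constructor
    · intro h; rw [h, ZMod.val_cast_of_lt (by omega)]
    · intro h; have := ZMod.natCast_rightInverse u; rw [← this, h]
  by_cases hu : u.val < s
  · rw [Finset.sum_eq_single ⟨u.val, hu⟩]
    · rw [if_pos ((key _).2 rfl), if_pos hu]
    · intro k _ hk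
      rw [if_neg]
      intro h
      exact hk (by ext; exact ((key k).1 h).symm)
    · intro h; exact absurd (Finset.mem_univ _) h
  · rw [if_neg hu, Finset.sum_eq_zero]
    intro k _
    rw [if_neg]
    intro h
    exact hu (((key k).1 h) ▸ k.isLt)

lemma sum_inr_high (hm : 2 * (m / 2) = m) (hs : s ≤ m / 2) (u : ZMod m) :
    (∑ k : Fin s, if u = ((k.val + m / 2 : ℕ) : ZMod m) then (1:ℝ) else 0)
      = if (m / 2 ≤ u.val ∧ u.val < m / 2 + s) then 1 else 0 := by
  have key : ∀ k : Fin s, (u = ((k.val + m / 2 : ℕ) : ZMod m)) ↔ u.val = k.val + m / 2 := by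
    intro k
    have hlt : k.val + m / 2 < m := by omega
    constructor
    · intro h; rw [h, ZMod.val_cast_of_lt hlt]
    · intro h; have := ZMod.natCast_rightInverse u; rw [← this, h]
  by_cases hu : m / 2 ≤ u.val ∧ u.val < m / 2 + s
  · rw [Finset.sum_eq_single ⟨u.val - m / 2, by omega⟩]
    · rw [if_pos ((key _).2 (by simp; omega)), if_pos hu]
    · intro k _ hk
      rw [if_neg]
      intro h
      refine hk ?_
      ext
      have := (key k).1 h
      simp
      omega
    · intro h; exact absurd (Finset.mem_univ _) h
  · rw [if_neg hu, Finset.sum_eq_zero]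
    intro k _
    rw [if_neg]
    intro h
    have := (key k).1 h
    exact hu ⟨by omega, by have := k.isLt; omega⟩

/-- row sums of the incidence matrix: every vertex has degree `2t + (s > 0)` -/
lemma B_rowsum (hm : 2 * (m / 2) = m) (htm : 2 * t < m / 2) (ht : 1 ≤ t)
    (hs01 : s = 0 ∨ s = m / 2) (u : ZMod m) :
    ∑ j, Bm m t s u j = 2 * t + (if 0 < s then (1:ℝ) else 0) := by
  have hm0 : 0 < m := hm0 ht htm
  have hs : s ≤ m / 2 := by rcases hs01 with h | h <;> omega
  rw [← Equiv.sum_comp (enc m t s) (fun j => Bm m t s u j), Fintype.sum_sum_type]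
  have hleft : ∑ p : Fin t × Fin m, Bm m t s u (enc m t s (Sum.inl p)) = 2 * t := by
    have : ∀ p : Fin t × Fin m, Bm m t s u (enc m t s (Sum.inl p))
        = (if u = ((p.2.val + 0 : ℕ) : ZMod m) then (1:ℝ) else 0)
          + (if u = ((p.2.val + (p.1.val + 1) : ℕ) : ZMod m) then (1:ℝ) else 0) := by
      intro p
      unfold Bm
      rw [show ((enc m t s (Sum.inl p)) : ℕ) = p.2.val + m * p.1.val from rfl,
        eA_inl, eD_inl p hm0]
      norm_num
    rw [Finset.sum_congr rfl fun p _ => this p, Finset.sum_add_distrib]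
    rw [Fintype.sum_prod_type]
    rw [Fintype.sum_prod_type]
    have h1 : ∀ a : Fin t, (∑ v : Fin m, if u = ((v.val + 0 : ℕ) : ZMod m) then (1:ℝ) else 0) = 1 :=
      fun a => sum_cast_ind u 0
    have h2 : ∀ a : Fin t, (∑ v : Fin m, if u = ((v.val + (a.val + 1) : ℕ) : ZMod m) then (1:ℝ) else 0) = 1 :=
      fun a => sum_cast_ind u (a.val + 1)
    rw [Finset.sum_congr rfl fun a _ => h1 a, Finset.sum_congr rfl fun a _ => h2 a]
    simp; ring
  have hright : ∑ k : Fin s, Bm m t s u (enc m t s (Sum.inr k))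
      = (if 0 < s then (1:ℝ) else 0) := by
    have : ∀ k : Fin s, Bm m t s u (enc m t s (Sum.inr k))
        = (if u = ((k.val : ℕ) : ZMod m) then (1:ℝ) else 0)
          + (if u = ((k.val + m / 2 : ℕ) : ZMod m) then (1:ℝ) else 0) := by
      intro k
      unfold Bm
      rw [show ((enc m t s (Sum.inr k)) : ℕ) = t * m + k.val from rfl, eA_inr, eD_inr]
    rw [Finset.sum_congr rfl fun k _ => this k, Finset.sum_add_distrib,
      sum_inr_low hs u, sum_inr_high hm hs u]
    rcases hs01 with h | h
    · subst h; norm_num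
    · have hv := ZMod.val_lt u
      rcases Nat.lt_or_ge u.val (m / 2) with hcase | hcase
      · rw [if_pos (by omega), if_neg (by omega), if_pos (by omega)]; norm_num
      · rw [if_neg (by omega), if_pos (by constructor <;> omega), if_pos (by omega)]; norm_num
  rw [hleft, hright]

end rowsum

section regular
open Finset Matrix
variable {m t s : ℕ} [NeZero m]

lemma B_colsum (v : Fin (t * m + s)) : ∑ u : ZMod m, Bm m t s u v = 2 := by
  unfold Bm
  rw [Finset.sum_add_distrib]
  simp
  norm_num

lemma lg_regular (hm : 2 * (m / 2) = m) (htm : 2 * t < m / 2) (ht : 1 ≤ t)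
    (hs01 : s = 0 ∨ s = m / 2) [DecidableRel (lg m t s).Adj] {D : ℕ}
    (hD : D + 2 = 2 * (2 * t + (if 0 < s then 1 else 0))) :
    (lg m t s).IsRegularOfDegree D := by
  intro v
  have hs : s ≤ m / 2 := by rcases hs01 with h | h <;> omega
  have hdeg : ((lg m t s).degree v : ℝ) = ∑ j, ((lg m t s).adjMatrix ℝ) v j := by
    have := SimpleGraph.adjMatrix_mulVec_const_apply (G := lg m t s) (α := ℝ)
      (a := (1:ℝ)) (v := v)
    simpa [Matrix.mulVec, dotProduct] using this.symm
  have hBtB := BtB (m := m) (t := t) (s := s) hm htm hs ht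
  have hsum : (∑ j, ((lg m t s).adjMatrix ℝ) v j) + 2
      = ∑ j, ((Bm m t s)ᵀ * Bm m t s) v j := by
    have hc := congrArg (fun M => ∑ j, M v j) hBtB
    simp only [Matrix.add_apply, Matrix.smul_apply, Finset.sum_add_distrib] at hc
    rw [← hc]
    congr 1
    simp [Matrix.one_apply]
  have hval : ∑ j, ((Bm m t s)ᵀ * Bm m t s) v j
      = 2 * (2 * t + (if 0 < s then (1:ℝ) else 0)) := by
    calc ∑ j, ((Bm m t s)ᵀ * Bm m t s) v j
        = ∑ j, ∑ u : ZMod m, Bm m t s u v * Bm m t s u j := by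
          refine Finset.sum_congr rfl fun j _ => ?_
          simp [Matrix.mul_apply, Matrix.transpose_apply]
      _ = ∑ u : ZMod m, ∑ j, Bm m t s u v * Bm m t s u j := Finset.sum_comm
      _ = ∑ u : ZMod m, Bm m t s u v * (2 * t + (if 0 < s then (1:ℝ) else 0)) := by
          refine Finset.sum_congr rfl fun u _ => ?_
          rw [← Finset.mul_sum, B_rowsum hm htm ht hs01 u]
      _ = (∑ u : ZMod m, Bm m t s u v) * (2 * t + (if 0 < s then (1:ℝ) else 0)) := by
          rw [Finset.sum_mul]
      _ = 2 * (2 * t + (if 0 < s then (1:ℝ) else 0)) := by rw [B_colsum]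
  have hfinal : ((lg m t s).degree v : ℝ) + 2 = ((D : ℝ)) + 2 := by
    rw [hdeg, hsum, hval]
    have : ((D : ℝ)) + 2 = ((D + 2 : ℕ) : ℝ) := by push_cast; ring
    rw [this, hD]
    push_cast
    by_cases h : 0 < s <;> simp [h] <;> ring
  have : ((lg m t s).degree v : ℝ) = (D : ℝ) := by linarith
  exact_mod_cast this

end regular

section eigen
open Matrix

lemma eigen_neg_two {n : ℕ} (hn : 0 < n) (G : SimpleGraph (Fin n)) [DecidableRel G.Adj]
    {ι : Type} [Fintype ι] (B : Matrix ι (Fin n) ℝ)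
    (hB : G.adjMatrix ℝ + 2 • 1 = Bᵀ * B)
    (y : Fin n → ℝ) (hy : y ≠ 0) (hBy : B *ᵥ y = 0) :
    (⨅ i, (adjMatrix_isHermitian G).eigenvalues i) = -2 := by
  haveI : Nonempty (Fin n) := ⟨⟨0, hn⟩⟩
  set A := G.adjMatrix ℝ with hAdef
  have hA : A.IsHermitian := adjMatrix_isHermitian G
  have hPSD : (A + 2 • 1).PosSemidef := by
    rw [hB]
    have := Matrix.posSemidef_conjTranspose_mul_self B
    rwa [Matrix.conjTranspose_eq_transpose_of_trivial] at this
  -- every eigenvalue is at least -2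
  have hgeq : ∀ i, -2 ≤ hA.eigenvalues i := by
    intro i
    have hv := hA.mulVec_eigenvectorBasis i
    set x : Fin n → ℝ := ⇑(hA.eigenvectorBasis i) with hxdef
    have hx0 : x ≠ 0 := by
      have := hA.eigenvectorBasis.orthonormal.ne_zero i
      intro hc
      apply this
      ext j
      exact congrFun hc j
    have hpos : 0 < dotProduct x x := by
      have := Matrix.dotProduct_self_star_pos_iff.2 hx0
      rwa [star_trivial] at this
    have hquad : 0 ≤ dotProduct (star x) ((A + 2 • 1) *ᵥ x) := hPSD.dotProduct_mulVec_nonneg x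
    have hMx : (A + 2 • 1) *ᵥ x = (hA.eigenvalues i + 2) • x := by
      rw [Matrix.add_mulVec, hv, Matrix.smul_mulVec, Matrix.one_mulVec]
      ext j
      simp [Pi.smul_apply]
      ring
    rw [hMx] at hquad
    have : dotProduct (star x) ((hA.eigenvalues i + 2) • x)
        = (hA.eigenvalues i + 2) * dotProduct x x := by
      rw [dotProduct_smul, star_trivial]
      simp [smul_eq_mul]
    rw [this] at hquad
    nlinarith
  -- -2 is attained
  have hdet : (A + 2 • 1).det = 0 := by
    apply Matrix.exists_mulVec_eq_zero_iff.1
    refine ⟨y, hy, ?_⟩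
    rw [hB, ← Matrix.mulVec_mulVec, hBy, Matrix.mulVec_zero]
  have hdet2 : (A + 2 • 1).det = ∏ i, (hA.eigenvalues i + 2) := by
    set U : Matrix (Fin n) (Fin n) ℝ := (Matrix.IsHermitian.eigenvectorUnitary hA : Matrix (Fin n) (Fin n) ℝ) with hU
    have hunit : U * star U = 1 :=
      (Matrix.mem_unitaryGroup_iff).mp (Matrix.IsHermitian.eigenvectorUnitary hA).2
    have hspec : A = U * Matrix.diagonal (RCLike.ofReal ∘ hA.eigenvalues) * star U :=
      hA.spectral_theorem
    have hdiag : Matrix.diagonal (RCLike.ofReal ∘ hA.eigenvalues) + 2 • (1 : Matrix (Fin n) (Fin n) ℝ)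
        = Matrix.diagonal (fun i => hA.eigenvalues i + 2) := by
      ext i j
      rw [Matrix.add_apply, Matrix.smul_apply, Matrix.diagonal_apply, Matrix.diagonal_apply,
        Matrix.one_apply]
      by_cases hij : i = j
      · rw [if_pos hij, if_pos hij, if_pos hij]; simp
      · rw [if_neg hij, if_neg hij, if_neg hij]; simp
    have hM : A + 2 • 1 = U * Matrix.diagonal (fun i => hA.eigenvalues i + 2) * star U := by
      conv_lhs => rw [hspec]
      rw [← hdiag]
      have h2 : (2 : ℕ) • (1 : Matrix (Fin n) (Fin n) ℝ)
          = U * (2 • (1 : Matrix (Fin n) (Fin n) ℝ)) * star U := by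
        rw [Matrix.mul_smul, Matrix.mul_one, Matrix.smul_mul, hunit]
      calc U * Matrix.diagonal (RCLike.ofReal ∘ hA.eigenvalues) * star U + 2 • 1
          = U * Matrix.diagonal (RCLike.ofReal ∘ hA.eigenvalues) * star U
            + U * (2 • (1 : Matrix (Fin n) (Fin n) ℝ)) * star U := by rw [← h2]
        _ = U * (Matrix.diagonal (RCLike.ofReal ∘ hA.eigenvalues) + 2 • 1) * star U := by
            rw [Matrix.mul_add U (Matrix.diagonal (RCLike.ofReal ∘ hA.eigenvalues)) (2 • 1),
              Matrix.add_mul]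
    rw [hM, Matrix.det_mul, Matrix.det_mul, Matrix.det_diagonal]
    have : U.det * (star U).det = 1 := by
      rw [← Matrix.det_mul, hunit, Matrix.det_one]
    calc U.det * (∏ i, (hA.eigenvalues i + 2)) * (star U).det
        = (U.det * (star U).det) * ∏ i, (hA.eigenvalues i + 2) := by ring
      _ = ∏ i, (hA.eigenvalues i + 2) := by rw [this, one_mul]
  have hex : ∃ i, hA.eigenvalues i = -2 := by
    rw [hdet] at hdet2
    obtain ⟨i, _, hi⟩ := Finset.prod_eq_zero_iff.1 hdet2.symm
    exact ⟨i, by linarith⟩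
  obtain ⟨i₀, hi₀⟩ := hex
  apply le_antisymm
  · have := ciInf_le (f := fun i => hA.eigenvalues i) (Set.Finite.bddBelow (Set.finite_range fun i => hA.eigenvalues i)) i₀
    rwa [hi₀] at this
  · exact le_ciInf hgeq

end eigen

section kernel
open Matrix Finset
variable {m t s : ℕ} [NeZero m]

/-- alternating vector on the Hamilton cycle -/
def yv (m t s : ℕ) : Fin (t * m + s) → ℝ := fun i => if i.val < m then (-1:ℝ)^i.val else 0

lemma val_eq_cast (w : ZMod m) (x : ℕ) (hx : x < m) : (w = (x : ZMod m)) ↔ w.val = x := by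
  constructor
  · intro h; rw [h, ZMod.val_cast_of_lt hx]
  · intro h; rw [← ZMod.natCast_rightInverse w, h]

lemma val_sub_one (hm : 2 * (m / 2) = m) (htm : 2 * t < m / 2) (ht : 1 ≤ t) (u : ZMod m) :
    (u - 1).val = if u.val = 0 then m - 1 else u.val - 1 := by
  have hm0 : 0 < m := hm0 ht htm
  have h1 : u - 1 = ((u.val + (m - 1) : ℕ) : ZMod m) := by
    push_cast [Nat.cast_sub (by omega : 1 ≤ m)]
    rw [ZMod.natCast_rightInverse u, ZMod.natCast_self]
    ring
  rw [h1, ZMod.val_natCast]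
  have hv := ZMod.val_lt u
  by_cases h0 : u.val = 0
  · rw [if_pos h0, h0]
    simp [Nat.mod_eq_of_lt (by omega : m - 1 < m)]
  · rw [if_neg h0]
    have : u.val + (m - 1) = (u.val - 1) + m := by omega
    rw [this, Nat.add_mod_right, Nat.mod_eq_of_lt (by omega)]

lemma Bm_ker (hm : 2 * (m / 2) = m) (htm : 2 * t < m / 2) (ht : 1 ≤ t) (hs : s ≤ m / 2) :
    Bm m t s *ᵥ yv m t s = 0 := by
  have hm0 : 0 < m := hm0 ht htm
  have hmtm : m ≤ t * m := Nat.le_mul_of_pos_left m (by omega)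
  funext u
  show ∑ j, Bm m t s u j * yv m t s j = 0
  rw [← Equiv.sum_comp (enc m t s) (fun j => Bm m t s u j * yv m t s j), Fintype.sum_sum_type]
  have hright : ∀ k : Fin s, Bm m t s u (enc m t s (Sum.inr k)) * yv m t s (enc m t s (Sum.inr k)) = 0 := by
    intro k
    have : yv m t s (enc m t s (Sum.inr k)) = 0 := by
      unfold yv
      rw [show ((enc m t s (Sum.inr k)) : ℕ) = t * m + k.val from rfl, if_neg (by omega)]
    rw [this, mul_zero]
  rw [Finset.sum_congr rfl (fun k _ => hright k), Finset.sum_const_zero, add_zero]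
  rw [Fintype.sum_prod_type]
  -- only a = 0 contributes
  have hzero : ∀ a : Fin t, a ≠ ⟨0, by omega⟩ →
      (∑ v : Fin m, Bm m t s u (enc m t s (Sum.inl (a, v))) * yv m t s (enc m t s (Sum.inl (a, v)))) = 0 := by
    intro a ha
    refine Finset.sum_eq_zero fun v _ => ?_
    have hav : 1 ≤ a.val := by
      rcases Nat.eq_zero_or_pos a.val with h | h
      · exact absurd (Fin.ext h) ha
      · exact h
    have : yv m t s (enc m t s (Sum.inl (a, v))) = 0 := by
      unfold yv
      rw [show ((enc m t s (Sum.inl (a, v))) : ℕ) = v.val + m * a.val from rfl, if_neg (by nlinarith [v.isLt])]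
    rw [this, mul_zero]
  rw [Finset.sum_eq_single (⟨0, by omega⟩ : Fin t) (fun a _ ha => hzero a ha)
    (fun h => absurd (Finset.mem_univ _) h)]
  -- the cycle sum
  have hterm : ∀ v : Fin m,
      Bm m t s u (enc m t s (Sum.inl (⟨0, by omega⟩, v))) * yv m t s (enc m t s (Sum.inl (⟨0, by omega⟩, v)))
      = ((if u = ((v.val : ℕ) : ZMod m) then (1:ℝ) else 0)
        + (if u = ((v.val + 1 : ℕ) : ZMod m) then (1:ℝ) else 0)) * (-1:ℝ)^v.val := by
    intro v
    have hval : ((enc m t s (Sum.inl (⟨0, by omega⟩, v))) : ℕ) = v.val + m * 0 := rfl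
    unfold Bm yv
    rw [hval]
    rw [eA_inl (⟨0, by omega⟩, v), eD_inl (⟨0, by omega⟩, v) hm0]
    norm_num
  rw [Finset.sum_congr rfl fun v _ => hterm v]
  have hsplit : ∑ v : Fin m,
      ((if u = ((v.val : ℕ) : ZMod m) then (1:ℝ) else 0)
        + (if u = ((v.val + 1 : ℕ) : ZMod m) then (1:ℝ) else 0)) * (-1:ℝ)^v.val
      = (∑ v : Fin m, (if u = ((v.val : ℕ) : ZMod m) then (1:ℝ) else 0) * (-1:ℝ)^v.val)
        + (∑ v : Fin m, (if u = ((v.val + 1 : ℕ) : ZMod m) then (1:ℝ) else 0) * (-1:ℝ)^v.val) := by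
    rw [← Finset.sum_add_distrib]
    exact Finset.sum_congr rfl fun v _ => by ring
  rw [hsplit]
  have hv := ZMod.val_lt u
  have hS1 : (∑ v : Fin m, (if u = ((v.val : ℕ) : ZMod m) then (1:ℝ) else 0) * (-1:ℝ)^v.val)
      = (-1:ℝ)^u.val := by
    rw [Finset.sum_eq_single (⟨u.val, hv⟩ : Fin m)]
    · rw [if_pos ((val_eq_cast u u.val hv).2 rfl), one_mul]
    · intro v _ hvne
      rw [if_neg, zero_mul]
      intro h
      exact hvne (Fin.ext ((val_eq_cast u v.val v.isLt).1 h).symm)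
    · intro h; exact absurd (Finset.mem_univ _) h
  have hS2 : (∑ v : Fin m, (if u = ((v.val + 1 : ℕ) : ZMod m) then (1:ℝ) else 0) * (-1:ℝ)^v.val)
      = (-1:ℝ)^((u - 1).val) := by
    have key : ∀ v : Fin m, (u = ((v.val + 1 : ℕ) : ZMod m)) ↔ (u - 1).val = v.val := by
      intro v
      have : ((v.val + 1 : ℕ) : ZMod m) = ((v.val : ℕ) : ZMod m) + 1 := by push_cast; ring
      rw [this]
      constructor
      · intro h
        have : u - 1 = ((v.val : ℕ) : ZMod m) := by rw [h]; ring
        exact (val_eq_cast (u - 1) v.val v.isLt).1 this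
      · intro h
        have h2 : u - 1 = ((v.val : ℕ) : ZMod m) := (val_eq_cast (u - 1) v.val v.isLt).2 h
        have : u = (u - 1) + 1 := by ring
        rw [this, h2]
    rw [Finset.sum_eq_single (⟨(u - 1).val, ZMod.val_lt _⟩ : Fin m)]
    · rw [if_pos ((key _).2 rfl), one_mul]
    · intro v _ hvne
      rw [if_neg, zero_mul]
      intro h
      exact hvne (Fin.ext ((key v).1 h).symm)
    · intro h; exact absurd (Finset.mem_univ _) h
  rw [hS1, hS2, val_sub_one hm htm ht u]
  by_cases h0 : u.val = 0
  · rw [if_pos h0, h0]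
    have hodd : Odd (m - 1) := by
      rcases Nat.even_or_odd (m - 1) with h | h
      · exfalso
        obtain ⟨c, hc⟩ := h
        omega
      · exact h
    rw [hodd.neg_one_pow]
    norm_num
  · rw [if_neg h0]
    have : u.val = (u.val - 1) + 1 := by omega
    rw [this]
    rw [pow_succ]
    have h4 : u.val - 1 = u.val - 1 := rfl
    rw [show u.val - 1 + 1 - 1 = u.val - 1 from by omega]
    ring

lemma yv_ne_zero (hm : 2 * (m / 2) = m) (htm : 2 * t < m / 2) (ht : 1 ≤ t) :
    yv m t s ≠ 0 := by
  have hm0 : 0 < m := hm0 ht htm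
  have hmtm : m ≤ t * m := Nat.le_mul_of_pos_left m (by omega)
  intro h
  have := congrFun h ⟨0, by omega⟩
  unfold yv at this
  rw [if_pos (by simpa using hm0)] at this
  simp at this

end kernel


section forcing
open Finset
variable {m t s : ℕ}

lemma eA_small (htm : 2 * t < m / 2) (ht : 1 ≤ t) {x : ℕ} (hx : x < m) :
    eA m t x = x ∧ eD m t x = 1 := by
  have hm0 : 0 < m := hm0 ht htm
  have hmtm : m ≤ t * m := Nat.le_mul_of_pos_left m (by omega)
  constructor
  · unfold eA; rw [if_pos (by omega), Nat.mod_eq_of_lt hx]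
  · unfold eD; rw [if_pos (by omega), Nat.div_eq_of_lt hx]

/-- the black starting set : everything except the interior cycle edges 1..m-2 -/
noncomputable def blackSet (m t s : ℕ) : Finset (Fin (t * m + s)) :=
  Finset.univ.filter (fun i => ¬(1 ≤ i.val ∧ i.val ≤ m - 2))

lemma cast_inj_small (htm : 2 * t < m / 2) (ht : 1 ≤ t) {x y : ℕ} (hx : x < m) (hy : y < m)
    (h : (x : ZMod m) = (y : ZMod m)) : x = y :=
  mod_inj hx hy (cast_eq_iff.1 h)

lemma forced_claim (hm : 2 * (m / 2) = m) (htm : 2 * t < m / 2) (ht : 1 ≤ t) :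
    ∀ k, k ≤ m - 2 → ∀ (hk : k < t * m + s),
      Forced (lg m t s) ↑(blackSet m t s) ⟨k, hk⟩ := by
  have hm0 : 0 < m := hm0 ht htm
  have hm6 : 6 ≤ m := by omega
  have hmtm : m ≤ t * m := Nat.le_mul_of_pos_left m (by omega)
  intro k
  induction k using Nat.strong_induction_on with
  | _ k IH =>
    intro hk2 hk
    rcases Nat.eq_zero_or_pos k with hk0 | hk1
    · subst hk0
      apply Forced.init
      simp [blackSet]
    · -- k ≥ 1 : forced by the previous cycle edge
      have hkm : k < m := by omega
      have hkm1 : k - 1 < t * m + s := by omega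
      refine Forced.force (⟨k - 1, hkm1⟩ : Fin (t * m + s)) (⟨k, hk⟩ : Fin (t * m + s)) (IH (k - 1) (by omega) (by omega) hkm1) ?_ ?_
      · -- adjacency
        refine ⟨by simp [Fin.ext_iff]; omega, ?_⟩
        unfold shares
        refine Or.inr (Or.inr (Or.inl ?_))
        obtain ⟨ha1, hd1⟩ := eA_small (m := m) htm ht (show k - 1 < m by omega)
        obtain ⟨ha2, _⟩ := eA_small (m := m) htm ht hkm
        rw [ha1, hd1, ha2]
        congr 1
        omega
      · -- all other neighbours are black or previously forced
        intro x hax hxk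
        by_cases hxS : x ∈ (blackSet m t s : Set (Fin (t * m + s)))
        · exact Forced.init x hxS
        · have hw : 1 ≤ x.val ∧ x.val ≤ m - 2 := by
            by_contra hc
            exact hxS (by simp [blackSet]; omega)
          obtain ⟨hax1, hax2⟩ := hw
          obtain ⟨hxa, hxd⟩ := eA_small (m := m) htm ht (show x.val < m by omega)
          obtain ⟨ha1, hd1⟩ := eA_small (m := m) htm ht (show k - 1 < m by omega)
          obtain ⟨hne, hsh⟩ := hax
          have hvne : (k - 1 : ℕ) ≠ x.val := by
            intro h
            apply hne
            apply Fin.ext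
            simpa using h
          unfold shares at hsh
          rw [hxa, hxd, ha1, hd1] at hsh
          have hxval : x.val = k - 2 ∧ 2 ≤ k := by
            rcases hsh with h | h | h | h
            · exact absurd (cast_inj_small htm ht (by omega) (by omega) h) hvne
            · have := cast_inj_small htm ht (by omega) (by omega) h
              omega
            · have := cast_inj_small htm ht (by omega) (by omega) h
              exfalso
              apply hxk
              apply Fin.ext
              simp
              omega
            · have := cast_inj_small htm ht (by omega) (by omega) h
              omega
          have hx2 : x = ⟨k - 2, by omega⟩ := by
            apply Fin.ext; simp [hxval.1]
          rw [hx2]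
          exact IH (k - 2) (by omega) (by omega) _

lemma black_forcing (hm : 2 * (m / 2) = m) (htm : 2 * t < m / 2) (ht : 1 ≤ t) :
    IsZeroForcingSet (lg m t s) ↑(blackSet m t s) := by
  intro v
  by_cases hv : v ∈ (blackSet m t s : Set (Fin (t * m + s)))
  · exact Forced.init v hv
  · have hw : 1 ≤ v.val ∧ v.val ≤ m - 2 := by
      by_contra hc
      exact hv (by simp [blackSet]; omega)
    have hveq : v = ⟨v.val, v.isLt⟩ := by apply Fin.ext; rfl
    rw [hveq]
    exact forced_claim hm htm ht v.val hw.2 v.isLt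

lemma black_card (hm : 2 * (m / 2) = m) (htm : 2 * t < m / 2) (ht : 1 ≤ t) :
    (blackSet m t s).card = (t * m + s) - (m - 2) := by
  have hm0 : 0 < m := hm0 ht htm
  have hmtm : m ≤ t * m := Nat.le_mul_of_pos_left m (by omega)
  classical
  have hW : (Finset.univ.filter (fun i : Fin (t * m + s) => 1 ≤ i.val ∧ i.val ≤ m - 2)).card
      = m - 2 := by
    rw [show (Finset.univ.filter (fun i : Fin (t * m + s) => 1 ≤ i.val ∧ i.val ≤ m - 2))
        = (Finset.Icc 1 (m - 2)).attachFin (fun a ha => by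
            simp only [Finset.mem_Icc] at ha; omega) from ?_]
    · rw [Finset.card_attachFin, Nat.card_Icc]
      omega
    · ext i
      simp [Finset.mem_attachFin, Finset.mem_Icc]
  have hcompl : blackSet m t s
      = (Finset.univ.filter (fun i : Fin (t * m + s) => 1 ≤ i.val ∧ i.val ≤ m - 2))ᶜ := by
    ext i
    simp [blackSet]
  rw [hcompl, Finset.card_compl, hW, Fintype.card_fin]

end forcing

end Aux

open scoped Classical in
/-- **Proposition 1**: for any even `D ≥ 2` and infinitely many `N` there is an `N`-vertex
`D`-regular graph `G*` with smallest adjacency eigenvalue `-2` and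
`N - Z(G*) ≥ 4N/(D+2) - 2`. -/
theorem exists_regular_graph_large_forcing_gap (D : ℕ) (hD : 2 ≤ D) (hDeven : Even D)
    (N₀ : ℕ) :
    ∃ N : ℕ, N₀ ≤ N ∧ ∃ G : SimpleGraph (Fin N),
      G.IsRegularOfDegree D ∧ lambdaMin G = -2 ∧
        4 * (N : ℝ) / ((D : ℝ) + 2) - 2 ≤ (N : ℝ) - zeroForcingNumber G := by
  obtain ⟨c, hc⟩ := hDeven
  set d : ℕ := D / 2 + 1 with hd_def
  have hd2 : 2 ≤ d := by omega
  have hDd : D + 2 = 2 * d := by omega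
  set t : ℕ := d / 2 with ht_def
  set r : ℕ := d % 2 with hr_def
  have hdtr : d = 2 * t + r := by omega
  have hr01 : r = 0 ∨ r = 1 := by omega
  have ht1 : 1 ≤ t := by omega
  set m : ℕ := 2 * (N₀ + d + 2) with hm_def
  have hm2 : m / 2 = N₀ + d + 2 := by omega
  have hm : 2 * (m / 2) = m := by omega
  have htm : 2 * t < m / 2 := by omega
  haveI : NeZero m := ⟨by omega⟩
  set s : ℕ := r * (m / 2) with hs_def
  have hs01 : s = 0 ∨ s = m / 2 := by
    rcases hr01 with h | h <;> simp [hs_def, h]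
  have hs : s ≤ m / 2 := by rcases hs01 with h | h <;> omega
  have hmtm : m ≤ t * m := Nat.le_mul_of_pos_left m (by omega)
  set N : ℕ := t * m + s with hN_def
  have hN0 : N₀ ≤ N := by omega
  have hNpos : 0 < N := by omega
  refine ⟨N, hN0, lg m t s, ?_, ?_, ?_⟩
  · -- regularity
    apply lg_regular hm htm ht1 hs01
    rcases hr01 with h | h
    · have hs0 : s = 0 := by simp [hs_def, h]
      rw [if_neg (by omega)]
      omega
    · have hs0 : s = m / 2 := by simp [hs_def, h]
      rw [if_pos (by omega)]
      omega
  · -- smallest eigenvalue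
    show (⨅ i, adjEigenvalues (lg m t s) i) = -2
    exact eigen_neg_two hNpos (lg m t s) (Bm m t s) (BtB hm htm hs ht1)
      (yv m t s) (yv_ne_zero hm htm ht1) (Bm_ker hm htm ht1 hs)
  · -- forcing gap
    have hZ : zeroForcingNumber (lg m t s) ≤ N - (m - 2) := by
      apply Nat.sInf_le
      exact ⟨blackSet m t s, black_card hm htm ht1, black_forcing hm htm ht1⟩
    have h2s : 2 * s = r * m := by
      rcases hr01 with h | h <;> simp [hs_def, h] <;> omega
    have h4N : 4 * N = m * (D + 2) := by
      have : m * (D + 2) = 4 * (t * m) + 2 * (r * m) := by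
        rw [hDd, hdtr]; ring
      omega
    have hfrac : 4 * (N : ℝ) / ((D : ℝ) + 2) = (m : ℝ) := by
      rw [div_eq_iff (by positivity : ((D : ℝ) + 2) ≠ 0)]
      exact_mod_cast h4N
    have hZr : (zeroForcingNumber (lg m t s) : ℝ) ≤ (N : ℝ) - ((m : ℝ) - 2) := by
      have h1 : (zeroForcingNumber (lg m t s) : ℝ) ≤ ((N - (m - 2) : ℕ) : ℝ) := by
        exact_mod_cast hZ
      have h2 : ((N - (m - 2) : ℕ) : ℝ) = (N : ℝ) - ((m : ℝ) - 2) := by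
        have hle : m - 2 ≤ N := by omega
        rw [Nat.cast_sub hle]
        have : ((m - 2 : ℕ) : ℝ) = (m : ℝ) - 2 := by
          rw [Nat.cast_sub (by omega)]
          norm_num
        rw [this]
      rw [h2] at h1
      exact h1
    rw [hfrac]
    linarith

end ZeroForcing
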